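/- (Corollary A.2, existence and uniqueness) There exists exactly one stationary solution: there exist a constant j ∈ ℝ and a differentiable function m : [0, ℓ] → ℝ with m(0) = m(ℓ) = 0 and m′(x) = −2j + βλ(1 − m(x)²) g(x) for all x ∈ [0, ℓ], and if (j₁, m₁) and (j₂, m₂) are two such pairs then j₁ = j₂ and m₁(x) = m₂(x) for all x ∈ [0, ℓ]. -/

import Mathlib

open Real Set

/-- The force profile `g(x) = ∫_{x-1}^x 1_{y ≤ ℓ/2} dy − ∫_x^{x+1} 1_{y ≤ ℓ/2} dy`. -/
noncomputable def gfun (ℓ : ℝ) (x : ℝ) : ℝ :=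
  (∫ y in (x - 1)..x, if y ≤ ℓ / 2 then (1 : ℝ) else 0) -
  (∫ y in x..(x + 1), if y ≤ ℓ / 2 then (1 : ℝ) else 0)

/-- An IVP solution with parameter `j`: a differentiable `m` on `[0, ℓ]` with `m 0 = 0`
and `m'(x) = -2j + βλ(1 - m(x)²) g(x)` on `[0, ℓ]`. -/
def IsIVPSolution (β lam ℓ j : ℝ) (m : ℝ → ℝ) : Prop :=
  m 0 = 0 ∧ ∀ x ∈ Icc (0 : ℝ) ℓ,
    HasDerivAt m (-2 * j + β * lam * (1 - m x ^ 2) * gfun ℓ x) x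

/-- A stationary solution: an IVP solution which also satisfies `m ℓ = 0`. -/
def IsStationarySolution (β lam ℓ j : ℝ) (m : ℝ → ℝ) : Prop :=
  IsIVPSolution β lam ℓ j m ∧ m ℓ = 0

section Aux
open MeasureTheory Filter Topology intervalIntegral

lemma integral_ind (a b c : ℝ) (hab : a ≤ b) :
    (∫ y in a..b, if y ≤ c then (1:ℝ) else 0) = max (min b c - a) 0 := by
  have h1 : (fun y => if y ≤ c then (1:ℝ) else 0) = (Iic c).indicator (fun _ => (1:ℝ)) := by
    funext y; simp [Set.indicator, mem_Iic]
  rw [intervalIntegral.integral_of_le hab, h1,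
    MeasureTheory.setIntegral_indicator measurableSet_Iic]
  have h2 : Ioc a b ∩ Iic c = Ioc a (min b c) := by
    ext y; simp only [mem_inter_iff, mem_Ioc, mem_Iic, le_min_iff]; tauto
  rw [h2]
  rw [MeasureTheory.setIntegral_const, Real.volume_real_Ioc, smul_eq_mul, mul_one]

lemma gfun_eq (ℓ x : ℝ) :
    gfun ℓ x = max (min x (ℓ/2) - (x - 1)) 0 - max (min (x+1) (ℓ/2) - x) 0 := by
  rw [gfun, integral_ind _ _ _ (by linarith), integral_ind _ _ _ (by linarith)]

lemma gfun_nonneg (ℓ x : ℝ) : 0 ≤ gfun ℓ x := by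
  rw [gfun_eq]
  have h : min (x+1) (ℓ/2) - x ≤ min x (ℓ/2) - (x - 1) := by
    rcases le_total (x+1) (ℓ/2) with h | h
    · rw [min_eq_left h]
      have : min x (ℓ/2) = x := min_eq_left (by linarith)
      rw [this]; linarith
    · rw [min_eq_right h]
      rcases le_total x (ℓ/2) with h2 | h2
      · rw [min_eq_left h2]; linarith
      · rw [min_eq_right h2]; linarith
  have := max_le_max h (le_refl (0:ℝ))
  linarith

lemma gfun_le_one (ℓ x : ℝ) : gfun ℓ x ≤ 1 := by
  rw [gfun_eq]
  have h1 : max (min x (ℓ/2) - (x - 1)) 0 ≤ 1 := by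
    apply max_le _ zero_le_one
    have : min x (ℓ/2) ≤ x := min_le_left _ _
    linarith
  have h2 : (0:ℝ) ≤ max (min (x+1) (ℓ/2) - x) 0 := le_max_right _ _
  linarith

lemma gfun_cont (ℓ : ℝ) : Continuous (gfun ℓ) := by
  have : gfun ℓ = fun x => max (min x (ℓ/2) - (x - 1)) 0 - max (min (x+1) (ℓ/2) - x) 0 := by
    funext x; exact gfun_eq ℓ x
  rw [this]; fun_prop

lemma gfun_half (ℓ : ℝ) : gfun ℓ (ℓ/2) = 1 := by
  rw [gfun_eq]
  rw [min_self, min_eq_right (by linarith)]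
  simp

noncomputable def clp (y : ℝ) : ℝ := max (-1) (min 1 y)

lemma clp_mem (y : ℝ) : -1 ≤ clp y ∧ clp y ≤ 1 := by
  constructor
  · exact le_max_left _ _
  · exact max_le (by norm_num) (min_le_left _ _)

lemma clp_eq_self {y : ℝ} (h1 : -1 ≤ y) (h2 : y ≤ 1) : clp y = y := by
  rw [clp, min_eq_right h2, max_eq_right h1]

lemma clp_lip (y z : ℝ) : |clp y - clp z| ≤ |y - z| := by
  have h1 : |clp y - clp z| ≤ max |(-1:ℝ) - (-1)| |min 1 y - min 1 z| :=
    abs_max_sub_max_le_max _ _ _ _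
  have h2 : |min 1 y - min 1 z| ≤ max |(1:ℝ) - 1| |y - z| := abs_min_sub_min_le_max _ _ _ _
  simp only [sub_self, abs_zero] at h1 h2
  have h3 : max (0:ℝ) |y - z| = |y - z| := max_eq_right (abs_nonneg _)
  rw [h3] at h2
  calc |clp y - clp z| ≤ max 0 |min 1 y - min 1 z| := h1
    _ ≤ max 0 |y - z| := max_le_max (le_refl 0) h2
    _ = |y - z| := max_eq_right (abs_nonneg _)

lemma clp_sq_mem (y : ℝ) : 0 ≤ 1 - clp y ^ 2 ∧ 1 - clp y ^ 2 ≤ 1 := by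
  have h := clp_mem y
  have h1 : clp y ^ 2 ≤ 1 := by nlinarith [h.1, h.2]
  have h2 : 0 ≤ clp y ^ 2 := sq_nonneg _
  exact ⟨by linarith, by linarith⟩

lemma clp_sq_lip (y z : ℝ) : |(1 - clp y ^ 2) - (1 - clp z ^ 2)| ≤ 2 * |y - z| := by
  have h : (1 - clp y ^ 2) - (1 - clp z ^ 2) = -((clp y + clp z) * (clp y - clp z)) := by ring
  rw [h, abs_neg, abs_mul]
  have h1 : |clp y + clp z| ≤ 2 := by
    have hy := clp_mem y; have hz := clp_mem z
    rw [abs_le]; constructor <;> linarith [hy.1, hy.2, hz.1, hz.2]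
  calc |clp y + clp z| * |clp y - clp z| ≤ 2 * |y - z| :=
    mul_le_mul h1 (clp_lip y z) (abs_nonneg _) (by norm_num)

/-- Barrier lemma: if `f a ≤ c` and `f` has negative derivative wherever it touches level `c`
on `[a,b]`, then `f ≤ c` on `[a,b]`. -/
lemma barrier {f : ℝ → ℝ} {a b c : ℝ} (hcont : ContinuousOn f (Icc a b))
    (hfa : f a ≤ c)
    (hd : ∀ t ∈ Icc a b, f t = c → ∃ d, HasDerivAt f d t ∧ d < 0) :
    ∀ x ∈ Icc a b, f x ≤ c := by
  by_contra hcon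
  push_neg at hcon
  obtain ⟨x₁, hx₁, hfx₁⟩ := hcon
  have hax₁ : a ≤ x₁ := hx₁.1
  set S : Set ℝ := {x | x ∈ Icc a x₁ ∧ f x ≤ c} with hS
  have hSne : S.Nonempty := ⟨a, ⟨le_refl a, hax₁⟩, hfa⟩
  have hSbdd : BddAbove S := ⟨x₁, fun x hx => hx.1.2⟩
  have hsub : Icc a x₁ ⊆ Icc a b := Icc_subset_Icc le_rfl hx₁.2
  have hScl : IsClosed S := by
    have : S = Icc a x₁ ∩ f ⁻¹' (Iic c) := by ext x; simp [hS, mem_Iic, and_comm]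
    rw [this]
    exact ContinuousOn.preimage_isClosed_of_isClosed (hcont.mono hsub) isClosed_Icc isClosed_Iic
  set t := sSup S with ht
  have htS : t ∈ S := hScl.csSup_mem hSne hSbdd
  have htx₁ : t < x₁ := lt_of_le_of_ne htS.1.2 (fun h => by
    rw [h] at htS; exact absurd htS.2 (not_le.mpr hfx₁))
  have hgt : ∀ s ∈ Ioc t x₁, c < f s := by
    intro s hs
    by_contra hle
    push_neg at hle
    have hsS : s ∈ S := ⟨⟨le_trans htS.1.1 hs.1.le, hs.2⟩, hle⟩
    exact absurd (le_csSup hSbdd hsS) (not_le.mpr hs.1)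
  -- f t = c
  have htIcc : t ∈ Icc a b := hsub htS.1
  have hIocmem : Ioc t x₁ ∈ 𝓝[>] t := Ioc_mem_nhdsGT_of_mem ⟨le_refl t, htx₁⟩
  have hftc : f t = c := by
    refine le_antisymm htS.2 ?_
    have hcw : ContinuousWithinAt f (Icc a b) t := hcont t htIcc
    have hle' : 𝓝[>] t ≤ 𝓝[Icc a b] t :=
      nhdsWithin_le_of_mem (Filter.mem_of_superset hIocmem (fun s hs =>
        ⟨le_trans htIcc.1 hs.1.le, le_trans hs.2 hx₁.2⟩))
    have htend : Tendsto f (𝓝[>] t) (𝓝 (f t)) := hcw.tendsto.mono_left hle'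
    exact ge_of_tendsto htend (Filter.mem_of_superset hIocmem
      (fun s hs => show c ≤ f s from (hgt s hs).le))
  obtain ⟨d, hder, hdneg⟩ := hd t htIcc hftc
  -- slope nonneg along right approach
  have hslope : Tendsto (slope f t) (𝓝[>] t) (𝓝 d) :=
    ((hasDerivAt_iff_tendsto_slope.mp hder).mono_left
      (nhdsWithin_mono t (fun s hs => ne_of_gt hs)))
  have hge : 0 ≤ d := by
    refine ge_of_tendsto hslope (Filter.mem_of_superset hIocmem (fun s hs => ?_))
    have h1 : 0 < s - t := by linarith [hs.1]
    have h2 : 0 < f s - f t := by rw [hftc]; linarith [hgt s hs]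
    show 0 ≤ slope f t s
    rw [slope_def_field]
    positivity
  linarith

noncomputable def vc (β lam ℓ j : ℝ) (t y : ℝ) : ℝ :=
  -2*j + β*lam*(1 - clp y ^ 2) * gfun ℓ t

lemma vc_lip {β lam : ℝ} (hbl : 0 ≤ β*lam) (ℓ j t : ℝ) :
    LipschitzWith (Real.toNNReal (2*(β*lam))) (vc β lam ℓ j t) := by
  apply LipschitzWith.of_dist_le_mul
  intro y z
  rw [Real.dist_eq, Real.dist_eq]
  have h : vc β lam ℓ j t y - vc β lam ℓ j t z
      = β*lam * gfun ℓ t * ((1 - clp y ^ 2) - (1 - clp z ^ 2)) := by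
    rw [vc, vc]; ring
  rw [h, abs_mul, abs_mul]
  have hg : |gfun ℓ t| ≤ 1 := abs_le.mpr ⟨by linarith [gfun_nonneg ℓ t], gfun_le_one ℓ t⟩
  have hc : ((Real.toNNReal (2*(β*lam))) : ℝ) = 2*(β*lam) :=
    Real.coe_toNNReal _ (by linarith)
  rw [hc, abs_of_nonneg hbl]
  calc β*lam * |gfun ℓ t| * |(1 - clp y ^ 2) - (1 - clp z ^ 2)|
      ≤ β*lam * 1 * (2 * |y - z|) := by
        apply mul_le_mul
        · exact mul_le_mul_of_nonneg_left hg hbl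
        · exact clp_sq_lip y z
        · exact abs_nonneg _
        · positivity
    _ = 2*(β*lam) * |y - z| := by ring

lemma vc_bound {β lam : ℝ} (hbl : 0 ≤ β*lam) (ℓ j t y : ℝ) :
    |vc β lam ℓ j t y| ≤ 2*|j| + β*lam := by
  rw [vc]
  have h1 : |(-2*j : ℝ)| = 2*|j| := by rw [abs_mul]; norm_num
  have h2 : |β*lam*(1 - clp y ^ 2) * gfun ℓ t| ≤ β*lam := by
    rw [abs_mul, abs_mul]
    have hg : |gfun ℓ t| ≤ 1 := abs_le.mpr ⟨by linarith [gfun_nonneg ℓ t], gfun_le_one ℓ t⟩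
    have hs : |1 - clp y ^ 2| ≤ 1 := abs_le.mpr ⟨by linarith [(clp_sq_mem y).1], (clp_sq_mem y).2⟩
    calc |β*lam| * |1 - clp y ^ 2| * |gfun ℓ t| ≤ |β*lam| * 1 * 1 := by
          apply mul_le_mul _ hg (abs_nonneg _) (by positivity)
          exact mul_le_mul_of_nonneg_left hs (abs_nonneg _)
      _ = β*lam := by rw [abs_of_nonneg hbl]; ring
  calc |(-2*j + β*lam*(1 - clp y ^ 2) * gfun ℓ t)| ≤ |(-2*j:ℝ)| + |β*lam*(1 - clp y ^ 2) * gfun ℓ t| :=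
        abs_add_le _ _
    _ ≤ 2*|j| + β*lam := by rw [h1]; linarith

lemma sol_exists {β lam ℓ : ℝ} (hbl : 0 ≤ β*lam) (hℓ : 2 < ℓ) (j : ℝ) :
    ∃ f : ℝ → ℝ, f 0 = 0 ∧ ∀ t ∈ Icc (-1) (ℓ+1),
      HasDerivWithinAt f (vc β lam ℓ j t (f t)) (Icc (-1) (ℓ+1)) t := by
  set C : ℝ := 2*|j| + β*lam with hC
  have hC0 : 0 ≤ C := by positivity
  obtain ⟨f, hf0, hf⟩ := IsPicardLindelof.exists_eq_forall_mem_Icc_hasDerivWithinAt₀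
    (t₀ := (⟨0, by constructor <;> linarith⟩ : Icc (-1:ℝ) (ℓ+1))) (x₀ := (0:ℝ))
    (a := ⟨C*(ℓ+1), by positivity⟩) (L := ⟨C, hC0⟩) (K := Real.toNNReal (2*(β*lam)))
    (f := vc β lam ℓ j)
    { lipschitzOnWith := fun t _ => (vc_lip hbl ℓ j t).lipschitzOnWith
      continuousOn := fun y _ => by
        apply Continuous.continuousOn
        exact continuous_const.add ((continuous_const.mul (gfun_cont ℓ)))
      norm_le := fun t _ y _ => by
        rw [Real.norm_eq_abs]; exact vc_bound hbl ℓ j t y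
      mul_max_le := by
        have : max (ℓ+1-0) (0-(-1)) = ℓ+1 := by
          rw [max_eq_left] <;> linarith
        show C * max (ℓ+1-0) (0 - -1) ≤ C*(ℓ+1) - 0
        rw [this]; linarith }
  exact ⟨f, hf0, hf⟩

lemma exists_stationary {β lam ℓ : ℝ} (hβ : 0 < β) (hlam : 0 < lam) (hℓ : 2 < ℓ) :
    ∃ j : ℝ, ∃ m : ℝ → ℝ, IsStationarySolution β lam ℓ j m := by
  have hbl : 0 < β*lam := mul_pos hβ hlam
  have hℓ0 : (0:ℝ) < ℓ := by linarith
  choose sol hsol0 hsolD using sol_exists hbl.le hℓ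
  have hDA : ∀ j : ℝ, ∀ t ∈ Icc (0:ℝ) ℓ, HasDerivAt (sol j) (vc β lam ℓ j t (sol j t)) t := by
    intro j t ht
    exact (hsolD j t ⟨by linarith [ht.1], by linarith [ht.2]⟩).hasDerivAt
      (Icc_mem_nhds (by linarith [ht.1]) (by linarith [ht.2]))
  have hcont : ∀ j : ℝ, ContinuousOn (sol j) (Icc (0:ℝ) ℓ) :=
    fun j t ht => ((hDA j t ht).continuousAt).continuousWithinAt
  set F : ℝ → ℝ := fun j => sol j ℓ with hF
  set K : NNReal := Real.toNNReal (2*(β*lam)) with hK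
  have hKcoe : (K:ℝ) = 2*(β*lam) := Real.coe_toNNReal _ (by linarith)
  have hKpos : (0:ℝ) < (K:ℝ) := by rw [hKcoe]; linarith
  -- Lipschitz continuity of F
  have key : ∀ j₁ j₂ : ℝ, dist (F j₁) (F j₂) ≤ gronwallBound 0 K (0 + 2*|j₁ - j₂|) (ℓ - 0) := by
    intro j₁ j₂
    have := dist_le_of_approx_trajectories_ODE (v := vc β lam ℓ j₁) (K := K)
      (f := sol j₁) (g := sol j₂)
      (f' := fun t => vc β lam ℓ j₁ t (sol j₁ t)) (g' := fun t => vc β lam ℓ j₂ t (sol j₂ t))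
      (a := 0) (b := ℓ) (εf := 0) (εg := 2*|j₁ - j₂|) (δ := 0)
      (fun t => vc_lip hbl.le ℓ j₁ t)
      ((hcont j₁))
      (fun t ht => ((hDA j₁ t ⟨ht.1, ht.2.le⟩).hasDerivWithinAt))
      (fun t ht => by simp)
      ((hcont j₂))
      (fun t ht => ((hDA j₂ t ⟨ht.1, ht.2.le⟩).hasDerivWithinAt))
      (fun t ht => by
        rw [Real.dist_eq]
        have h : vc β lam ℓ j₂ t (sol j₂ t) - vc β lam ℓ j₁ t (sol j₂ t) = 2*(j₁ - j₂) := by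
          simp only [vc]; ring
        rw [h, abs_mul]
        norm_num)
      (by rw [hsol0 j₁, hsol0 j₂]; simp)
    exact this ℓ ⟨hℓ0.le, le_refl ℓ⟩
  set CC : ℝ := (exp ((K:ℝ)*ℓ) - 1)/(K:ℝ) with hCCdef
  have hgb : ∀ ε : ℝ, gronwallBound 0 K ε (ℓ - 0) = ε * CC := by
    intro ε
    rw [gronwallBound_of_K_ne_0 (ne_of_gt hKpos), hCCdef]
    field_simp
    simp only [sub_zero]; ring
  have hCC : 0 ≤ CC := by
    apply div_nonneg _ hKpos.le
    have h1 : (1:ℝ) ≤ exp ((K:ℝ)*ℓ) := by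
      rw [← Real.exp_zero]
      apply exp_le_exp.mpr
      have := hKpos.le
      positivity
    linarith
  have h2CC : (0:ℝ) ≤ 2*CC := by linarith
  have hFcont : Continuous F := by
    apply LipschitzWith.continuous (K := Real.toNNReal (2*CC))
    apply LipschitzWith.of_dist_le_mul
    intro j₁ j₂
    calc dist (F j₁) (F j₂) ≤ gronwallBound 0 K (0 + 2*|j₁ - j₂|) (ℓ - 0) := key j₁ j₂
      _ = (0 + 2*|j₁ - j₂|) * CC := hgb _
      _ = (2*CC) * |j₁ - j₂| := by ring
      _ = (Real.toNNReal (2*CC)) * dist j₁ j₂ := by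
          rw [Real.dist_eq, Real.coe_toNNReal _ h2CC]
  -- F 0 > 0
  have hmono0 : MonotoneOn (sol 0) (Icc (0:ℝ) ℓ) := by
    apply monotoneOn_of_deriv_nonneg (convex_Icc _ _) (hcont 0)
    · intro x hx
      rw [interior_Icc] at hx
      exact ((hDA 0 x ⟨hx.1.le, hx.2.le⟩).differentiableAt).differentiableWithinAt
    · intro x hx
      rw [interior_Icc] at hx
      rw [(hDA 0 x ⟨hx.1.le, hx.2.le⟩).deriv]
      simp only [vc]
      have h1 := (clp_sq_mem (sol 0 x)).1
      have h2 := gfun_nonneg ℓ x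
      have h3 := mul_nonneg (mul_nonneg hbl.le h1) h2
      linarith
  have hF0 : 0 < F 0 := by
    rcases lt_or_ge 0 (F 0) with h | h
    · exact h
    exfalso
    have hFnn : sol 0 0 ≤ sol 0 ℓ := hmono0 ⟨le_refl _, hℓ0.le⟩ ⟨hℓ0.le, le_refl _⟩ hℓ0.le
    rw [hsol0 0] at hFnn
    have hFz : sol 0 ℓ = 0 := le_antisymm h hFnn
    have hzero : ∀ x ∈ Icc (0:ℝ) ℓ, sol 0 x = 0 := by
      intro x hx
      refine le_antisymm ?_ ?_
      · have := hmono0 hx ⟨hℓ0.le, le_refl _⟩ hx.2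
        rw [hFz] at this; exact this
      · have := hmono0 ⟨le_refl _, hℓ0.le⟩ hx hx.1
        rw [hsol0 0] at this; exact this
    have hmem : Icc (0:ℝ) ℓ ∈ 𝓝 (ℓ/2) := Icc_mem_nhds (by linarith) (by linarith)
    have heq : sol 0 =ᶠ[𝓝 (ℓ/2)] (fun _ => (0:ℝ)) :=
      Filter.eventually_of_mem hmem (fun x hx => hzero x hx)
    have h0 : HasDerivAt (sol 0) 0 (ℓ/2) :=
      (hasDerivAt_const (ℓ/2) (0:ℝ)).congr_of_eventuallyEq heq
    have hv := hDA 0 (ℓ/2) ⟨by linarith, by linarith⟩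
    have hval : vc β lam ℓ 0 (ℓ/2) (sol 0 (ℓ/2)) = β*lam := by
      simp only [vc]
      rw [hzero (ℓ/2) ⟨by linarith, by linarith⟩, gfun_half,
        clp_eq_self (by norm_num) (by norm_num)]
      ring
    rw [hval] at hv
    have := hv.unique h0
    linarith
  -- F (β*lam) < 0
  have hFJ : F (β*lam) < 0 := by
    set J : ℝ := β*lam with hJ
    have hlin : ∀ x : ℝ, HasDerivAt (fun y : ℝ => sol J y + β*lam*y)
        (vc β lam ℓ J x (sol J x) + β*lam) x → True := fun _ _ => trivial
    have hanti : AntitoneOn (fun x => sol J x + β*lam*x) (Icc (0:ℝ) ℓ) := by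
      have hder : ∀ x ∈ Icc (0:ℝ) ℓ, HasDerivAt (fun y : ℝ => sol J y + β*lam*y)
          (vc β lam ℓ J x (sol J x) + β*lam) x := by
        intro x hx
        have h1 : HasDerivAt (fun y : ℝ => β*lam*y) (β*lam) x := by
          simpa using (hasDerivAt_id x).const_mul (β*lam)
        exact (hDA J x hx).add h1
      apply antitoneOn_of_deriv_nonpos (convex_Icc _ _)
      · exact (hcont J).add (Continuous.continuousOn (by fun_prop))
      · intro x hx
        rw [interior_Icc] at hx
        exact ((hder x ⟨hx.1.le, hx.2.le⟩).differentiableAt).differentiableWithinAt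
      · intro x hx
        rw [interior_Icc] at hx
        rw [(hder x ⟨hx.1.le, hx.2.le⟩).deriv]
        simp only [vc]
        have h1 := (clp_sq_mem (sol J x)).1
        have h2 := (clp_sq_mem (sol J x)).2
        have h3 := gfun_nonneg ℓ x
        have h4 := gfun_le_one ℓ x
        have h5 : (1 - clp (sol J x) ^ 2) * gfun ℓ x ≤ 1 := by nlinarith
        nlinarith
    have hmono := hanti ⟨le_refl _, hℓ0.le⟩ ⟨hℓ0.le, le_refl _⟩ hℓ0.le
    simp only at hmono
    rw [hsol0 J] at hmono
    have : sol J ℓ ≤ -(β*lam*ℓ) := by linarith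
    have hpos : 0 < β*lam*ℓ := by positivity
    calc F J = sol J ℓ := rfl
      _ ≤ -(β*lam*ℓ) := this
      _ < 0 := by linarith
  -- IVT
  have hsub := intermediate_value_Icc' (by positivity : (0:ℝ) ≤ β*lam) hFcont.continuousOn
  have h0mem : (0:ℝ) ∈ Icc (F (β*lam)) (F 0) := ⟨hFJ.le, hF0.le⟩
  obtain ⟨j, hjmem, hFj⟩ := hsub h0mem
  have hjpos : 0 < j := by
    rcases eq_or_lt_of_le hjmem.1 with h | h
    · exfalso; rw [← h] at hFj; rw [hFj] at hF0; exact lt_irrefl 0 hF0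
    · exact h
  have hmℓ : sol j ℓ = 0 := hFj
  have hm0 : sol j 0 = 0 := hsol0 j
  -- upper barrier
  have hup : ∀ x ∈ Icc (0:ℝ) ℓ, sol j x ≤ 1 := by
    apply barrier (hcont j) (by rw [hm0]; norm_num)
    intro t ht hmt
    refine ⟨vc β lam ℓ j t (sol j t), hDA j t ht, ?_⟩
    simp only [vc]
    rw [hmt, clp_eq_self (by norm_num) (le_refl 1)]
    simp only [one_pow, sub_self, mul_zero, zero_mul, add_zero]
    linarith
  -- lower barrier
  have hlow : ∀ x ∈ Icc (0:ℝ) ℓ, -1 < sol j x := by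
    by_contra hcon
    push_neg at hcon
    obtain ⟨x₀, hx₀, hmx₀⟩ := hcon
    have hbar := barrier (f := sol j) (a := x₀) (b := ℓ) (c := -1)
      ((hcont j).mono (Icc_subset_Icc hx₀.1 (le_refl ℓ))) hmx₀
      (fun t ht hmt => by
        refine ⟨vc β lam ℓ j t (sol j t), hDA j t ⟨le_trans hx₀.1 ht.1, ht.2⟩, ?_⟩
        simp only [vc]
        rw [hmt]
        rw [clp_eq_self (le_refl (-1)) (by norm_num)]
        have h9 : (1:ℝ) - (-1)^2 = 0 := by norm_num
        rw [h9]
        simp only [mul_zero, zero_mul, add_zero]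
        linarith)
    have := hbar ℓ ⟨hx₀.2, le_refl ℓ⟩
    rw [hmℓ] at this
    linarith
  -- conclude
  refine ⟨j, sol j, ⟨⟨hm0, ?_⟩, hmℓ⟩⟩
  intro x hx
  have hder := hDA j x hx
  have hclp : clp (sol j x) = sol j x := clp_eq_self (hlow x hx).le (hup x hx)
  simp only [vc] at hder
  rw [hclp] at hder
  exact hder

section Uniq2
variable {β lam ℓ j₁ j₂ : ℝ} {m₁ m₂ : ℝ → ℝ}

lemma stat_core (hℓ : 2 < ℓ)
    (h₁ : IsStationarySolution β lam ℓ j₁ m₁) (h₂ : IsStationarySolution β lam ℓ j₂ m₂) :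
    ∃ v : ℝ → ℝ, (∀ x ∈ Icc (0:ℝ) ℓ, ∃ E : ℝ, 0 < E ∧
        HasDerivAt v (2*(j₂ - j₁) * E) x ∧ v x = (m₁ x - m₂ x) * E) ∧
      v 0 = 0 ∧ v ℓ = 0 := by
  have hℓ0 : (0:ℝ) < ℓ := by linarith
  obtain ⟨⟨h₁0, h₁d⟩, h₁ℓ⟩ := h₁
  obtain ⟨⟨h₂0, h₂d⟩, h₂ℓ⟩ := h₂
  set clampi : ℝ → ℝ := fun x => max 0 (min ℓ x) with hclampi
  have hclampi_mem : ∀ x, clampi x ∈ Icc (0:ℝ) ℓ := by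
    intro x
    constructor
    · exact le_max_left _ _
    · exact max_le hℓ0.le (min_le_left _ _)
  have hclampi_eq : ∀ x ∈ Icc (0:ℝ) ℓ, clampi x = x := by
    intro x hx
    rw [hclampi]
    simp only
    rw [min_eq_right hx.2, max_eq_right hx.1]
  have hclampi_cont : Continuous clampi := by fun_prop
  have hm₁c : ∀ y ∈ Icc (0:ℝ) ℓ, ContinuousAt m₁ y := fun y hy => (h₁d y hy).continuousAt
  have hm₂c : ∀ y ∈ Icc (0:ℝ) ℓ, ContinuousAt m₂ y := fun y hy => (h₂d y hy).continuousAt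
  set a : ℝ → ℝ := fun x => β*lam * gfun ℓ x * (m₁ (clampi x) + m₂ (clampi x)) with hadef
  have ha : Continuous a := by
    apply Continuous.mul
    · exact continuous_const.mul (gfun_cont ℓ)
    · apply Continuous.add
      · exact continuous_iff_continuousAt.mpr fun x =>
          (hm₁c _ (hclampi_mem x)).comp hclampi_cont.continuousAt
      · exact continuous_iff_continuousAt.mpr fun x =>
          (hm₂c _ (hclampi_mem x)).comp hclampi_cont.continuousAt
  set A : ℝ → ℝ := fun x => ∫ t in (0:ℝ)..x, a t with hAdef
  have hA : ∀ x : ℝ, HasDerivAt A (a x) x := by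
    intro x
    exact intervalIntegral.integral_hasDerivAt_right (ha.intervalIntegrable _ _)
      (ha.stronglyMeasurable.stronglyMeasurableAtFilter) ha.continuousAt
  refine ⟨fun x => (m₁ x - m₂ x) * exp (A x), ?_, by simp only []; rw [h₁0, h₂0]; simp, by simp only []; rw [h₁ℓ, h₂ℓ]; simp⟩
  intro x hx
  refine ⟨exp (A x), exp_pos _, ?_, rfl⟩
  have hw : HasDerivAt (fun y => m₁ y - m₂ y)
      ((-2 * j₁ + β * lam * (1 - m₁ x ^ 2) * gfun ℓ x) -
       (-2 * j₂ + β * lam * (1 - m₂ x ^ 2) * gfun ℓ x)) x := (h₁d x hx).sub (h₂d x hx)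
  have hexp : HasDerivAt (fun y => exp (A y)) (exp (A x) * a x) x := (hA x).exp
  have hmul : HasDerivAt (fun y => (m₁ y - m₂ y) * exp (A y)) _ x := hw.fun_mul hexp
  convert hmul using 1
  have hax : a x = β*lam * gfun ℓ x * (m₁ x + m₂ x) := by
    rw [hadef]
    simp only
    rw [hclampi_eq x hx]
  rw [hax]
  ring

lemma stat_not_lt (hℓ : 2 < ℓ)
    (h₁ : IsStationarySolution β lam ℓ j₁ m₁) (h₂ : IsStationarySolution β lam ℓ j₂ m₂) :
    ¬ j₁ < j₂ := by
  intro hlt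
  have hℓ0 : (0:ℝ) < ℓ := by linarith
  obtain ⟨v, hv, hv0, hvℓ⟩ := stat_core hℓ h₁ h₂
  choose E hEpos hvd hvE using hv
  have hcont : ContinuousOn v (Icc 0 ℓ) := fun x hx => (hvd x hx).continuousAt.continuousWithinAt
  have hmono : StrictMonoOn v (Icc (0:ℝ) ℓ) := by
    apply strictMonoOn_of_deriv_pos (convex_Icc _ _) hcont
    intro x hx
    rw [interior_Icc] at hx
    rw [(hvd x ⟨hx.1.le, hx.2.le⟩).deriv]
    have := hEpos x ⟨hx.1.le, hx.2.le⟩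
    have h2 : 0 < j₂ - j₁ := by linarith
    positivity
  have := hmono ⟨le_refl _, hℓ0.le⟩ ⟨hℓ0.le, le_refl _⟩ hℓ0
  rw [hv0, hvℓ] at this
  exact lt_irrefl 0 this

lemma stat_uniq (hℓ : 2 < ℓ)
    (h₁ : IsStationarySolution β lam ℓ j₁ m₁) (h₂ : IsStationarySolution β lam ℓ j₂ m₂) :
    j₁ = j₂ ∧ ∀ x ∈ Icc (0:ℝ) ℓ, m₁ x = m₂ x := by
  have hj : j₁ = j₂ :=
    le_antisymm (not_lt.mp (stat_not_lt hℓ h₂ h₁)) (not_lt.mp (stat_not_lt hℓ h₁ h₂))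
  refine ⟨hj, ?_⟩
  obtain ⟨v, hv, hv0, hvℓ⟩ := stat_core hℓ h₁ h₂
  choose E hEpos hvd hvE using hv
  have hcont : ContinuousOn v (Icc 0 ℓ) := fun x hx => (hvd x hx).continuousAt.continuousWithinAt
  have hconst : ∀ x ∈ Icc (0:ℝ) ℓ, v x = v 0 := by
    apply constant_of_has_deriv_right_zero hcont
    intro x hx
    have hd := hvd x ⟨hx.1, hx.2.le⟩
    rw [hj] at hd
    simp only [sub_self, zero_mul, mul_zero] at hd
    exact hd.hasDerivWithinAt
  intro x hx
  have h1 := hconst x hx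
  rw [hv0] at h1
  have h2 := hvE x hx
  rw [h1] at h2
  have h3 := (hEpos x hx).ne'
  have := mul_eq_zero.mp h2.symm
  rcases this with h | h
  · linarith [sub_eq_zero.mp h]
  · exact absurd h h3

end Uniq2

end Aux

/-- Corollary A.2 (existence and uniqueness of the stationary solution). -/
theorem stationary_exists_unique (β lam ℓ : ℝ) (hβ : 0 < β) (hlam : 0 < lam) (hℓ : 2 < ℓ) :
    (∃ j : ℝ, ∃ m : ℝ → ℝ, IsStationarySolution β lam ℓ j m) ∧
    (∀ j₁ j₂ : ℝ, ∀ m₁ m₂ : ℝ → ℝ,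
      IsStationarySolution β lam ℓ j₁ m₁ → IsStationarySolution β lam ℓ j₂ m₂ →
      j₁ = j₂ ∧ ∀ x ∈ Icc (0 : ℝ) ℓ, m₁ x = m₂ x) := by
  constructor
  · exact exists_stationary hβ hlam hℓ
  · intro j₁ j₂ m₁ m₂ h1 h2
    exact stat_uniq hℓ h1 h2
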